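/- Let d ≥ 2 and a, c > 0, set δ = a/(3cd), and define p : ℝ^d → ℝ by p(x) = (a/3)∑_{j=1}^{d−1} h_j(x) − (a/3)⟨e_1, x⟩ + c·h_δ(x). Then x* = (a/(3cd))·1_d (the vector with all coordinates equal to a/(3cd)) is a minimizer of p with p(x*) = −a²/(18cd), and every x ∈ ℝ^d with ⟨e_d, x⟩ = 0 satisfies p(x) ≥ 0; consequently p(x) − p(x*) ≥ a²/(18cd) for every x with ⟨e_d, x⟩ = 0. -/

import Mathlib

open scoped BigOperators RealInnerProductSpace

noncomputable section

/-- The `k`-th standard basis vector of `ℝ^d`, `0`-indexed (so the paper's `e_k` is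
`stdBasis d (k-1)`); out-of-range indices give `0`. -/
def stdBasis (d j : ℕ) : EuclideanSpace ℝ (Fin d) :=
  if h : j < d then EuclideanSpace.single ⟨j, h⟩ 1 else 0

/-- Scalar Huber function. -/
def huber1 (δ t : ℝ) : ℝ := if |t| ≤ δ then t ^ 2 / 2 else δ * |t| - δ ^ 2 / 2

/-- Huber function on `ℝ^d`: `h_δ(x) = ∑_{j=1}^d h_δ^j(⟨e_j, x⟩)`. -/
def huber (d : ℕ) (δ : ℝ) (x : EuclideanSpace ℝ (Fin d)) : ℝ :=
  ∑ j ∈ Finset.range d, huber1 δ ⟪stdBasis d j, x⟫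

lemma huber1_nonneg {δ : ℝ} (hδ : 0 ≤ δ) (t : ℝ) : 0 ≤ huber1 δ t := by
  unfold huber1; split_ifs with h
  · positivity
  · push_neg at h; nlinarith [abs_nonneg t]

lemma huber1_ge (δ t : ℝ) : δ * |t| - δ ^ 2 / 2 ≤ huber1 δ t := by
  unfold huber1; split_ifs with h
  · nlinarith [sq_abs t, sq_nonneg (|t| - δ)]
  · exact le_refl _

lemma tele (y : ℕ → ℝ) (j : ℕ) :
    |y 0| ≤ (∑ i ∈ Finset.Icc 1 j, |y i - y (i - 1)|) + |y j| := by
  induction j with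
  | zero => simp
  | succ n ih =>
    rw [Finset.sum_Icc_succ_top (by omega)]
    have h1 : |y n| - |y (n + 1)| ≤ |y (n + 1) - y n| := by
      rw [abs_sub_comm]; exact abs_sub_abs_le_abs_sub _ _
    simp only [Nat.add_sub_cancel]
    linarith

theorem stmt3 (d : ℕ) (hd : 2 ≤ d) (a c : ℝ) (ha : 0 < a) (hc : 0 < c)
    (δ : ℝ) (hδ : δ = a / (3 * c * d))
    (p : EuclideanSpace ℝ (Fin d) → ℝ)
    (hp : ∀ x, p x =
      (a / 3) * ∑ j ∈ Finset.Icc 1 (d - 1), |⟪stdBasis d j - stdBasis d (j - 1), x⟫|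
        - (a / 3) * ⟪stdBasis d 0, x⟫ + c * huber d δ x)
    (xstar : EuclideanSpace ℝ (Fin d))
    (hxstar : xstar = (WithLp.equiv 2 (Fin d → ℝ)).symm fun _ => a / (3 * c * d)) :
    (∀ x, p xstar ≤ p x) ∧
    p xstar = -(a ^ 2 / (18 * c * d)) ∧
    (∀ x, ⟪stdBasis d (d - 1), x⟫ = 0 → 0 ≤ p x) ∧
    (∀ x, ⟪stdBasis d (d - 1), x⟫ = 0 → a ^ 2 / (18 * c * d) ≤ p x - p xstar) := by
  have hd0 : (0:ℝ) < d := by positivity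
  have hδ0 : 0 < δ := by rw [hδ]; positivity
  have hinner : ∀ (x : EuclideanSpace ℝ (Fin d)) (j : ℕ) (h : j < d),
      ⟪stdBasis d j, x⟫ = x ⟨j, h⟩ := by
    intro x j h
    simp [stdBasis, dif_pos h, EuclideanSpace.inner_single_left]
  -- value at xstar
  have hxs : ∀ j : Fin d, xstar j = δ := by
    intro j; rw [hxstar, hδ]; simp
  have hsum0 : ∑ j ∈ Finset.Icc 1 (d - 1), |⟪stdBasis d j - stdBasis d (j - 1), xstar⟫| = 0 := by
    apply Finset.sum_eq_zero
    intro j hj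
    rw [Finset.mem_Icc] at hj
    have h1 : j < d := by omega
    have h2 : j - 1 < d := by omega
    rw [inner_sub_left, hinner _ _ h1, hinner _ _ h2, hxs, hxs]
    simp
  have hhubs : huber d δ xstar = d * (δ ^ 2 / 2) := by
    unfold huber
    rw [Finset.sum_congr rfl (fun j hj => ?_), Finset.sum_const, Finset.card_range,
      nsmul_eq_mul]
    rw [hinner _ _ (Finset.mem_range.mp hj), hxs]
    rw [huber1, if_pos (by rw [abs_of_pos hδ0])]
  have hpxs : p xstar = -(a ^ 2 / (18 * c * d)) := by
    rw [hp, hsum0, hhubs, hinner _ _ (by omega : 0 < d), hxs, hδ]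
    field_simp
    ring
  -- general lower bound
  have key : ∀ x, -(a ^ 2 / (18 * c * d)) ≤ p x := by
    intro x
    set y : ℕ → ℝ := fun j => ⟪stdBasis d j, x⟫ with hy
    set S := ∑ j ∈ Finset.Icc 1 (d - 1), |y j - y (j - 1)| with hS
    set T := ∑ j ∈ Finset.range d, |y j| with hT
    set H := ∑ j ∈ Finset.range d, huber1 δ (y j) with hH
    have hS0 : 0 ≤ S := Finset.sum_nonneg fun _ _ => abs_nonneg _
    have hpx : p x = (a / 3) * S - (a / 3) * y 0 + c * H := by
      rw [hp]; simp only [inner_sub_left, hS, hy, huber, hH]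
    have hTlb : (d : ℝ) * (|y 0| - S) ≤ T := by
      rw [hT]
      calc (d : ℝ) * (|y 0| - S) = ∑ _j ∈ Finset.range d, (|y 0| - S) := by
            rw [Finset.sum_const, Finset.card_range, nsmul_eq_mul]
        _ ≤ ∑ j ∈ Finset.range d, |y j| := by
            apply Finset.sum_le_sum
            intro j hj
            have hjd : j ≤ d - 1 := by have := Finset.mem_range.mp hj; omega
            have h1 := tele y j
            have h2 : (∑ i ∈ Finset.Icc 1 j, |y i - y (i - 1)|) ≤ S := by
              apply Finset.sum_le_sum_of_subset_of_nonneg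
              · apply Finset.Icc_subset_Icc_right hjd
              · intro _ _ _; exact abs_nonneg _
            linarith
    have hHlb : δ * T - (d : ℝ) * (δ ^ 2 / 2) ≤ H := by
      rw [hH, hT, Finset.mul_sum]
      calc (∑ j ∈ Finset.range d, δ * |y j|) - (d : ℝ) * (δ ^ 2 / 2)
          = ∑ j ∈ Finset.range d, (δ * |y j| - δ ^ 2 / 2) := by
            rw [Finset.sum_sub_distrib, Finset.sum_const, Finset.card_range, nsmul_eq_mul]
        _ ≤ ∑ j ∈ Finset.range d, huber1 δ (y j) :=
            Finset.sum_le_sum fun j _ => huber1_ge δ (y j)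
    have h3 : c * (δ * T - (d : ℝ) * (δ ^ 2 / 2)) ≤ c * H :=
      mul_le_mul_of_nonneg_left hHlb hc.le
    have h4 : c * δ * ((d : ℝ) * (|y 0| - S)) ≤ c * δ * T :=
      mul_le_mul_of_nonneg_left hTlb (by positivity)
    have e1 : c * δ * ((d : ℝ) * (|y 0| - S)) = (a / 3) * |y 0| - (a / 3) * S := by
      rw [hδ]; field_simp
    have e2 : c * (δ * T - (d : ℝ) * (δ ^ 2 / 2)) = c * δ * T - a ^ 2 / (18 * c * d) := by
      rw [hδ]; field_simp; ring
    have h5 : y 0 ≤ |y 0| := le_abs_self _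
    rw [hpx]
    nlinarith [h3, h4, e1, e2]
  -- zero-set lower bound
  have zkey : ∀ x, ⟪stdBasis d (d - 1), x⟫ = 0 → 0 ≤ p x := by
    intro x hx
    set y : ℕ → ℝ := fun j => ⟪stdBasis d j, x⟫ with hy
    set S := ∑ j ∈ Finset.Icc 1 (d - 1), |y j - y (j - 1)| with hS
    set H := ∑ j ∈ Finset.range d, huber1 δ (y j) with hH
    have hpx : p x = (a / 3) * S - (a / 3) * y 0 + c * H := by
      rw [hp]; simp only [inner_sub_left, hS, hy, huber, hH]
    have hH0 : 0 ≤ H := Finset.sum_nonneg fun j _ => huber1_nonneg hδ0.le _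
    have htel := tele y (d - 1)
    have hyd : y (d - 1) = 0 := hx
    have hy0S : y 0 ≤ S := by
      have := le_abs_self (y 0)
      rw [hyd, abs_zero] at htel
      linarith
    rw [hpx]
    nlinarith
  refine ⟨fun x => by rw [hpxs]; exact key x, hpxs, zkey, fun x hx => by
    have := zkey x hx; rw [hpxs]; linarith⟩

end
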